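/- For every prime p not dividing 42, the number of points (including the point at infinity) on the elliptic curve y² + xy + y = x³ + x² - 4x + 5 over the field with p elements is divisible by 8. -/

import Mathlib

open WeierstrassCurve WeierstrassCurve.Affine

private def Wc (p : ℕ) : WeierstrassCurve.Affine (ZMod p) :=
  { a₁ := 1, a₂ := 1, a₃ := 1, a₄ := -4, a₆ := 5 }

private noncomputable def toOpt {F : Type*} [Field F] {W : WeierstrassCurve.Affine F} :
    W.Point → Option {P : F × F // W.Equation P.1 P.2}
  | .zero => none
  | @WeierstrassCurve.Affine.Point.some _ _ _ x y h => some ⟨(x, y), h.1⟩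

private lemma some_eq_some {F : Type*} [Field F] {W : WeierstrassCurve.Affine F}
    {x₁ y₁ x₂ y₂ : F} (hx : x₁ = x₂) (hy : y₁ = y₂) (h₁ : W.Nonsingular x₁ y₁)
    (h₂ : W.Nonsingular x₂ y₂) : Point.some _ _ h₁ = Point.some _ _ h₂ := by
  subst hx; subst hy; rfl

theorem stmt_7 (p : ℕ) (hp : p.Prime) (h : ¬ (p ∣ 42)) :
    8 ∣ Nat.card {P : ZMod p × ZMod p //
      P.2 ^ 2 + P.1 * P.2 + P.2 = P.1 ^ 3 + P.1 ^ 2 - 4 * P.1 + 5} + 1 := by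
  haveI : Fact p.Prime := ⟨hp⟩
  -- basic nonvanishing
  have hnz : ∀ n : ℕ, n ∣ 42 → n ≠ 0 → (n : ZMod p) ≠ 0 := by
    intro n hn hn0 hz
    exact h (dvd_trans ((ZMod.natCast_eq_zero_iff n p).mp hz) hn)
  have h2 : (2 : ZMod p) ≠ 0 := by
    have := hnz 2 (by norm_num) (by norm_num); exact_mod_cast this
  have h3 : (3 : ZMod p) ≠ 0 := by
    have := hnz 3 (by norm_num) (by norm_num); exact_mod_cast this
  have h7 : (7 : ZMod p) ≠ 0 := by
    have := hnz 7 (by norm_num) (by norm_num); exact_mod_cast this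
  have h6 : (6 : ZMod p) ≠ 0 := by
    have : (6 : ZMod p) = 2 * 3 := by norm_num
    rw [this]; exact mul_ne_zero h2 h3
  have h4 : (4 : ZMod p) ≠ 0 := by
    have : (4 : ZMod p) = 2 * 2 := by norm_num
    rw [this]; exact mul_ne_zero h2 h2
  set W := Wc p with hW
  have hΔ : W.Δ ≠ 0 := by
    have hval : W.Δ = -(2 ^ 8 * 3 ^ 2 * 7) := by
      simp [hW, Wc, WeierstrassCurve.Δ, WeierstrassCurve.b₂, WeierstrassCurve.b₄,
        WeierstrassCurve.b₆, WeierstrassCurve.b₈]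
      norm_num
    rw [hval]
    exact neg_ne_zero.mpr (mul_ne_zero (mul_ne_zero (pow_ne_zero _ h2) (pow_ne_zero _ h3)) h7)
  have hns : ∀ x y : ZMod p, W.Equation x y → W.Nonsingular x y := fun x y he =>
    (W.equation_iff_nonsingular_of_Δ_ne_zero hΔ).mp he
  -- the torsion point of order 8
  have hT : W.Nonsingular (-1) 3 := by
    apply hns
    rw [equation_iff]
    simp [hW, Wc]; ring
  have hT2 : W.Nonsingular 1 (-3) := by
    apply hns
    rw [equation_iff]
    simp [hW, Wc]; ring
  have hT4 : W.Nonsingular (-3) 1 := by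
    apply hns
    rw [equation_iff]
    simp [hW, Wc]; ring
  set T : W.Point := Point.some _ _ hT with hTdef
  -- first doubling
  have hy1 : (3 : ZMod p) ≠ W.negY (-1) 3 := by
    simp only [negY, hW, Wc]
    intro hc
    apply h6
    linear_combination hc
  have key2 : T + T = Point.some _ _ hT2 := by
    rw [hTdef, Point.add_self_of_Y_ne hy1]
    have hy' : (3 : ZMod p) - W.negY (-1) 3 = 6 := by
      simp only [negY, hW, Wc]; ring
    have hL : W.slope (-1) (-1) 3 3 = -1 := by
      rw [slope_of_Y_ne rfl hy1, hy']
      simp only [hW, Wc]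
      field_simp
      ring
    apply some_eq_some
    · rw [hL]; simp only [addX, hW, Wc]; ring
    · rw [hL]; simp only [addY, negAddY, addX, negY, hW, Wc]; ring
  -- second doubling
  have hy2 : (-3 : ZMod p) ≠ W.negY 1 (-3) := by
    simp only [negY, hW, Wc]
    intro hc
    apply h4
    linear_combination -hc
  have key4 : Point.some _ _ hT2 + Point.some _ _ hT2 = Point.some _ _ hT4 := by
    rw [Point.add_self_of_Y_ne hy2]
    have hy' : (-3 : ZMod p) - W.negY 1 (-3) = -4 := by
      simp only [negY, hW, Wc]; ring
    have hL : W.slope 1 1 (-3) (-3) = -1 := by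
      rw [slope_of_Y_ne rfl hy2, hy']
      simp only [hW, Wc]
      rw [div_eq_iff (by intro hc; apply h4; linear_combination -hc)]
      ring
    apply some_eq_some
    · rw [hL]; simp only [addX, hW, Wc]; ring
    · rw [hL]; simp only [addY, negAddY, addX, negY, hW, Wc]; ring
  -- third doubling gives zero
  have key8 : Point.some _ _ hT4 + Point.some _ _ hT4 = 0 := by
    apply Point.add_self_of_Y_eq
    simp only [negY, hW, Wc]; ring
  -- order of T is 8
  have h2T : (2 : ℕ) • T = Point.some _ _ hT2 := by rw [two_nsmul, key2]
  have h4T : (4 : ℕ) • T = Point.some _ _ hT4 := by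
    have : (4 : ℕ) • T = (2 : ℕ) • ((2 : ℕ) • T) := by
      rw [← mul_nsmul]
    rw [this, h2T, two_nsmul, key4]
  have h8T : (8 : ℕ) • T = 0 := by
    have : (8 : ℕ) • T = (2 : ℕ) • ((4 : ℕ) • T) := by
      rw [← mul_nsmul]
    rw [this, h4T, two_nsmul, key8]
  have hdvd8 : addOrderOf T ∣ 8 := addOrderOf_dvd_of_nsmul_eq_zero h8T
  have hndvd4 : ¬ addOrderOf T ∣ 4 := by
    intro hc
    have : (4 : ℕ) • T = 0 := addOrderOf_dvd_iff_nsmul_eq_zero.mp hc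
    rw [h4T] at this
    exact Point.some_ne_zero hT4 this
  have hord : addOrderOf T = 8 := by
    have hle : addOrderOf T ≤ 8 := Nat.le_of_dvd (by norm_num) hdvd8
    set n := addOrderOf T with hn
    clear_value n
    interval_cases n <;> revert hdvd8 hndvd4 <;> decide
  have hdvdcard : (8 : ℕ) ∣ Nat.card W.Point := hord ▸ addOrderOf_dvd_natCard T
  let e : W.Point ≃ Option {P : ZMod p × ZMod p // W.Equation P.1 P.2} :=
    { toFun := toOpt
      invFun := fun o => o.elim 0 fun s => Point.some _ _ (hns s.1.1 s.1.2 s.2)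
      left_inv := by rintro (_ | _) <;> rfl
      right_inv := by rintro (_ | ⟨⟨x, y⟩, hxy⟩) <;> rfl }
  have hcard : Nat.card W.Point = Nat.card {P : ZMod p × ZMod p // W.Equation P.1 P.2} + 1 := by
    rw [Nat.card_congr e, Finite.card_option]
  have hsub : Nat.card {P : ZMod p × ZMod p // W.Equation P.1 P.2} =
      Nat.card {P : ZMod p × ZMod p //
        P.2 ^ 2 + P.1 * P.2 + P.2 = P.1 ^ 3 + P.1 ^ 2 - 4 * P.1 + 5} := by
    apply Nat.card_congr
    apply Equiv.subtypeEquivRight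
    intro P
    rw [equation_iff]
    simp only [hW, Wc]
    constructor <;> intro hh <;> linear_combination hh
  rw [hcard, hsub] at hdvdcard
  exact hdvdcard
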